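/- arXiv:2511.19723 — 2 statements merged into one kernel-verified Lean document; each statement's English description precedes it below -/
import Mathlib

section
/- If f : ℝ^n → ℝ is convex, differentiable, and its gradient is L-Lipschitz, then for any points x, y, z we have ⟨∇f(x) − ∇f(y), z − y⟩ ≥ −(L/2)‖z − x‖². -/
open RealInnerProductSpace

section aux

variable {n : ℕ}

private lemma line_hasDerivAt {f : EuclideanSpace ℝ (Fin n) → ℝ}
    {g : EuclideanSpace ℝ (Fin n) → EuclideanSpace ℝ (Fin n)}
    (hgrad : ∀ x, HasGradientAt f (g x) x)
    (p v : EuclideanSpace ℝ (Fin n)) (t : ℝ) :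
    HasDerivAt (fun s : ℝ => f (p + s • v)) ⟪g (p + t • v), v⟫ t := by
  have hc : HasDerivAt (fun s : ℝ => p + s • v) v t := by
    simpa using ((hasDerivAt_id t).smul_const v).const_add p
  have := ((hgrad (p + t • v)).hasFDerivAt).comp_hasDerivAt t hc
  simpa [InnerProductSpace.toDual_apply_apply, Function.comp_def] using this

private lemma first_order {f : EuclideanSpace ℝ (Fin n) → ℝ}
    {g : EuclideanSpace ℝ (Fin n) → EuclideanSpace ℝ (Fin n)}
    (hconv : ConvexOn ℝ Set.univ f)
    (hgrad : ∀ x, HasGradientAt f (g x) x)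
    (a b : EuclideanSpace ℝ (Fin n)) :
    f a + ⟪g a, b - a⟫ ≤ f b := by
  set v := b - a with hv
  have hφ : ConvexOn ℝ Set.univ (fun t : ℝ => f (a + t • v)) := by
    have := hconv.comp_affineMap (AffineMap.lineMap a b : ℝ →ᵃ[ℝ] EuclideanSpace ℝ (Fin n))
    simp only [Set.preimage_univ] at this
    have heq : (fun t : ℝ => f (a + t • v)) = f ∘ (AffineMap.lineMap a b) := by
      funext t
      simp only [Function.comp_apply, AffineMap.lineMap_apply_module]
      congr 1
      rw [hv]; module
    rw [heq]
    exact this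
  have hd : HasDerivAt (fun t : ℝ => f (a + t • v)) ⟪g (a + (0:ℝ) • v), v⟫ 0 :=
    line_hasDerivAt hgrad a v 0
  have h01 : (0:ℝ) < 1 := one_pos
  have := hφ.le_slope_of_hasDerivAt (Set.mem_univ 0) (Set.mem_univ 1) h01 hd
  rw [slope_def_field] at this
  simp only [zero_smul, add_zero, one_smul] at this hd
  have hab : a + v = b := by rw [hv]; abel
  rw [hab] at this
  have : ⟪g a, v⟫ ≤ (f b - f a) / (1 - 0) := this
  rw [hv] at this
  linarith [this]

private lemma descent {f : EuclideanSpace ℝ (Fin n) → ℝ}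
    {g : EuclideanSpace ℝ (Fin n) → EuclideanSpace ℝ (Fin n)} {L : ℝ} (hL : 0 < L)
    (hgrad : ∀ x, HasGradientAt f (g x) x)
    (hlip : ∀ x y, ‖g x - g y‖ ≤ L * ‖x - y‖)
    (a b : EuclideanSpace ℝ (Fin n)) :
    f b ≤ f a + ⟪g a, b - a⟫ + L / 2 * ‖b - a‖ ^ 2 := by
  set v := b - a with hv
  set χ : ℝ → ℝ := fun t => L / 2 * ‖v‖ ^ 2 * t ^ 2 + ⟪g a, v⟫ * t + f a - f (a + t • v) with hχ
  have hχd : ∀ t : ℝ, HasDerivAt χ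
      (L / 2 * ‖v‖ ^ 2 * (2 * t) + ⟪g a, v⟫ - ⟪g (a + t • v), v⟫) t := by
    intro t
    have h1 : HasDerivAt (fun t : ℝ => L / 2 * ‖v‖ ^ 2 * t ^ 2)
        (L / 2 * ‖v‖ ^ 2 * (2 * t)) t := by
      simpa [mul_comm] using (hasDerivAt_pow 2 t).const_mul (L / 2 * ‖v‖ ^ 2)
    have h2 : HasDerivAt (fun t : ℝ => ⟪g a, v⟫ * t) ⟪g a, v⟫ t := by
      simpa using (hasDerivAt_id t).const_mul ⟪g a, v⟫
    exact ((h1.add h2).add_const (f a)).sub (line_hasDerivAt hgrad a v t)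
  have hmono : MonotoneOn χ (Set.Icc (0:ℝ) 1) := by
    apply monotoneOn_of_deriv_nonneg (convex_Icc 0 1)
    · exact fun t _ => (hχd t).continuousAt.continuousWithinAt
    · exact fun t _ => ((hχd t).differentiableAt).differentiableWithinAt
    · intro t ht
      rw [interior_Icc] at ht
      rw [(hχd t).deriv]
      have hip : ⟪g (a + t • v), v⟫ - ⟪g a, v⟫ ≤ L * t * ‖v‖ ^ 2 := by
        have h1 : ⟪g (a + t • v) - g a, v⟫ ≤ ‖g (a + t • v) - g a‖ * ‖v‖ :=
          real_inner_le_norm _ _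
        have h2 : ‖g (a + t • v) - g a‖ ≤ L * (t * ‖v‖) := by
          have := hlip (a + t • v) a
          simpa [norm_smul, abs_of_pos ht.1, mul_assoc] using this
        have h3 : ⟪g (a + t • v) - g a, v⟫ ≤ L * (t * ‖v‖) * ‖v‖ :=
          h1.trans (mul_le_mul_of_nonneg_right h2 (norm_nonneg v))
        rw [inner_sub_left] at h3
        nlinarith [h3]
      nlinarith [hip]
  have h01 : χ 0 ≤ χ 1 :=
    hmono (Set.mem_Icc.2 ⟨le_refl 0, zero_le_one⟩) (Set.mem_Icc.2 ⟨zero_le_one, le_refl 1⟩)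
      zero_le_one
  have hab : a + (1:ℝ) • v = b := by rw [hv]; simp
  simp only [hχ, hab, zero_smul, add_zero, one_pow, mul_one, zero_pow, mul_zero,
    ne_eq, OfNat.ofNat_ne_zero, not_false_eq_true] at h01
  linarith [h01]

end aux

/-- If `f : ℝ^n → ℝ` is convex, differentiable, and its gradient is `L`-Lipschitz, then for any
points `x, y, z` we have `⟪∇f(x) − ∇f(y), z − y⟫ ≥ −(L/2)‖z − x‖²`. -/
theorem stmt_0 {n : ℕ} (f : EuclideanSpace ℝ (Fin n) → ℝ)
    (g : EuclideanSpace ℝ (Fin n) → EuclideanSpace ℝ (Fin n)) (L : ℝ) (hL : 0 < L)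
    (hconv : ConvexOn ℝ Set.univ f)
    (hgrad : ∀ x, HasGradientAt f (g x) x)
    (hlip : ∀ x y, ‖g x - g y‖ ≤ L * ‖x - y‖)
    (x y z : EuclideanSpace ℝ (Fin n)) :
    ⟪g x - g y, z - y⟫ ≥ -(L / 2) * ‖z - x‖ ^ 2 := by
  have hA : f y + ⟪g y, z - y⟫ ≤ f z := first_order hconv hgrad y z
  have hA' : f x + ⟪g x, y - x⟫ ≤ f y := first_order hconv hgrad x y
  have hB : f z ≤ f x + ⟪g x, z - x⟫ + L / 2 * ‖z - x‖ ^ 2 := descent hL hgrad hlip x z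
  have hsplit : ⟪g x - g y, z - y⟫ = ⟪g x, z - x⟫ - ⟪g x, y - x⟫ - ⟪g y, z - y⟫ := by
    have h1 : z - y = (z - x) - (y - x) := by abel
    rw [inner_sub_left, h1, inner_sub_right]
  rw [hsplit]
  linarith
end

section
/- Let Ω be the block matrix Ω = [[I, −αAᵀ, 0], [0, αη(I − (ρ/η)W), 0], [0, 0, (α/ρ)W†]] with α, η, ρ > 0, W symmetric PSD with ρλ_max(W) < η, and A arbitrary. If α < 4λ_min(ηI − ρW)/‖A‖², then the symmetrization S = (Ω + Ωᵀ)/2 is positive semidefinite. -/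
open Matrix
open scoped RealInnerProductSpace

lemma rayleigh_min {n : ℕ} (M : Matrix (Fin n) (Fin n) ℝ) (hM : M.IsHermitian)
    (x : Fin n → ℝ) : (⨅ i, hM.eigenvalues i) * (x ⬝ᵥ x) ≤ x ⬝ᵥ (M *ᵥ x) := by
  set U : Matrix (Fin n) (Fin n) ℝ := (hM.eigenvectorUnitary : Matrix (Fin n) (Fin n) ℝ) with hUdef
  set d : Fin n → ℝ := hM.eigenvalues with hd
  have hU : U * star U = 1 := (Matrix.mem_unitaryGroup_iff).mp hM.eigenvectorUnitary.2
  have hspec : M = U * Matrix.diagonal d * star U := by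
    simpa [U, d] using hM.spectral_theorem
  set y : Fin n → ℝ := star U *ᵥ x with hy
  have hxy : x ⬝ᵥ (M *ᵥ x) = ∑ i, d i * (y i)^2 := by
    rw [hspec, ← mulVec_mulVec, ← mulVec_mulVec]
    rw [Matrix.dotProduct_mulVec, ← Matrix.mulVec_transpose]
    have : Uᵀ = star U := by
      simp [Matrix.star_eq_conjTranspose, Matrix.conjTranspose_eq_transpose_of_trivial]
    rw [this, ← hy]
    simp [dotProduct, Matrix.mulVec_diagonal, pow_two, mul_comm, mul_assoc, mul_left_comm]
  have hxx : x ⬝ᵥ x = ∑ i, (y i)^2 := by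
    have h1 : y ⬝ᵥ y = x ⬝ᵥ x := by
      rw [hy, Matrix.dotProduct_mulVec, ← Matrix.mulVec_transpose]
      have : (star U)ᵀ = U := by
        simp [Matrix.star_eq_conjTranspose, Matrix.conjTranspose_eq_transpose_of_trivial]
      rw [this, Matrix.mulVec_mulVec, hU, Matrix.one_mulVec]
    rw [← h1]; simp [dotProduct, pow_two]
  rw [hxy, hxx, Finset.mul_sum]
  apply Finset.sum_le_sum
  intro i _
  have hle : (⨅ j, d j) ≤ d i := ciInf_le (Finite.bddBelow_range _) i
  nlinarith [sq_nonneg (y i)]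

lemma pinv_symm_psd {n : ℕ} (W Wd : Matrix (Fin n) (Fin n) ℝ) (hW : W.PosSemidef)
    (h1 : W * Wd * W = W) (h2 : Wd * W * Wd = Wd)
    (h3 : (W * Wd)ᵀ = W * Wd) (h4 : (Wd * W)ᵀ = Wd * W) : Wd.PosSemidef := by
  have hct : ∀ (B : Matrix (Fin n) (Fin n) ℝ), Bᴴ = Bᵀ := fun B =>
    conjTranspose_eq_transpose_of_trivial B
  have hWt : Wᵀ = W := by rw [← hct]; exact hW.1
  have e1 : Wdᵀ * W = W * Wd := by rw [← hWt, ← transpose_mul, hWt, h3]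
  have e2 : W * Wdᵀ = Wd * W := by rw [← hWt, ← transpose_mul, hWt, h4]
  have c1 : W * Wdᵀ * W = W := by
    have := congrArg transpose h1
    rwa [transpose_mul, transpose_mul, hWt, ← mul_assoc] at this
  have c2 : Wdᵀ * W * Wdᵀ = Wdᵀ := by
    have := congrArg transpose h2
    rwa [transpose_mul, transpose_mul, hWt, ← mul_assoc] at this
  have hA : W * Wd = (Wd * W) * (W * Wd) := by
    calc W * Wd = (W * Wdᵀ * W) * Wd := by rw [c1]
    _ = (W * Wdᵀ) * (W * Wd) := by rw [mul_assoc]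
    _ = (Wd * W) * (W * Wd) := by rw [e2]
  have hB : Wd * W = (Wd * W) * (W * Wd) := by
    calc Wd * W = Wd * (W * Wdᵀ * W) := by rw [c1]
    _ = Wd * (W * Wdᵀ) * W := by rw [← mul_assoc]
    _ = Wd * W * Wdᵀ * W := by rw [← mul_assoc]
    _ = (Wd * W) * (Wdᵀ * W) := by rw [mul_assoc]
    _ = (Wd * W) * (W * Wd) := by rw [e1]
  have comm : W * Wd = Wd * W := hA.trans hB.symm
  have hsymm : Wdᵀ = Wd := by
    calc Wdᵀ = Wdᵀ * W * Wdᵀ := c2.symm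
    _ = (W * Wd) * Wdᵀ := by rw [e1]
    _ = (Wd * W) * Wdᵀ := by rw [comm]
    _ = Wd * (W * Wdᵀ) := by rw [mul_assoc]
    _ = Wd * (Wd * W) := by rw [e2]
    _ = Wd * (W * Wd) := by rw [comm]
    _ = Wd * W * Wd := by rw [← mul_assoc]
    _ = Wd := h2
  have := hW.conjTranspose_mul_mul_same Wd
  rwa [hct, hsymm, h2] at this

/-- Positive semidefiniteness of the symmetrization of the weight matrix `Ω` of Theorem 1: with
`α, η, ρ > 0`, `W` symmetric PSD with `ρ λ_max(W) < η`, `W†` the Moore–Penrose pseudoinverse of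
`W`, `A` arbitrary, and `Ω = [[I, −αAᵀ, 0], [0, αη(I − (ρ/η)W), 0], [0, 0, (α/ρ)W†]]`, if
`α‖A‖² < 4 λ_min(ηI − ρW)` (`‖A‖` the spectral norm), then `S = (Ω + Ωᵀ)/2` is positive
semidefinite. -/
theorem stmt_19 {m p : ℕ} (W Wd : Matrix (Fin m) (Fin m) ℝ) (hW : W.PosSemidef)
    (h1 : W * Wd * W = W) (h2 : Wd * W * Wd = Wd)
    (h3 : (W * Wd)ᵀ = W * Wd) (h4 : (Wd * W)ᵀ = Wd * W)
    (A : Matrix (Fin m) (Fin p) ℝ) (α ρ η : ℝ)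
    (hα : 0 < α) (hρ : 0 < ρ) (hη : 0 < η)
    (hstep : ρ * (⨆ i, hW.1.eigenvalues i) < η)
    (hM : (η • (1 : Matrix (Fin m) (Fin m) ℝ) - ρ • W).IsHermitian)
    (hαA : α * ‖LinearMap.toContinuousLinearMap (Matrix.toEuclideanLin A)‖ ^ 2 <
      4 * ⨅ i, hM.eigenvalues i) :
    (((1 : ℝ) / 2) •
      ((Matrix.fromBlocks (1 : Matrix (Fin p) (Fin p) ℝ)
          (Matrix.fromCols (-(α • Aᵀ)) (0 : Matrix (Fin p) (Fin m) ℝ))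
          (0 : Matrix (Fin m ⊕ Fin m) (Fin p) ℝ)
          (Matrix.fromBlocks ((α * η) • ((1 : Matrix (Fin m) (Fin m) ℝ) - (ρ / η) • W)) 0 0
            ((α / ρ) • Wd))) +
        (Matrix.fromBlocks (1 : Matrix (Fin p) (Fin p) ℝ)
          (Matrix.fromCols (-(α • Aᵀ)) (0 : Matrix (Fin p) (Fin m) ℝ))
          (0 : Matrix (Fin m ⊕ Fin m) (Fin p) ℝ)
          (Matrix.fromBlocks ((α * η) • ((1 : Matrix (Fin m) (Fin m) ℝ) - (ρ / η) • W)) 0 0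
            ((α / ρ) • Wd)))ᵀ)).PosSemidef := by
  set C : ℝ := ‖LinearMap.toContinuousLinearMap (Matrix.toEuclideanLin A)‖ with hC
  set μ : ℝ := ⨅ i, hM.eigenvalues i with hμ
  set M : Matrix (Fin m) (Fin m) ℝ := η • (1 : Matrix (Fin m) (Fin m) ℝ) - ρ • W with hMdef
  have hM1 : (α * η) • ((1 : Matrix (Fin m) (Fin m) ℝ) - (ρ / η) • W) = α • M := by
    rw [hMdef, smul_sub, smul_sub, smul_smul, smul_smul, smul_smul]
    congr 2
    field_simp
  have hWd : Wd.PosSemidef := pinv_symm_psd W Wd hW h1 h2 h3 h4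
  simp only [hM1]
  rw [posSemidef_iff_dotProduct_mulVec]
  constructor
  · show _ = _
    have hct : ∀ {a b : Type} [Fintype a] [Fintype b] (B : Matrix a b ℝ), Bᴴ = Bᵀ := fun B =>
      conjTranspose_eq_transpose_of_trivial B
    rw [conjTranspose_smul, conjTranspose_add, hct, hct, transpose_transpose]
    simp [add_comm]
  · intro x
    have hx : x = Sum.elim (x ∘ Sum.inl) (Sum.elim (x ∘ Sum.inr ∘ Sum.inl) (x ∘ Sum.inr ∘ Sum.inr)) := by
      funext i; rcases i with i | (j | j) <;> rfl
    set u := x ∘ Sum.inl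
    set v := x ∘ Sum.inr ∘ Sum.inl
    set w := x ∘ Sum.inr ∘ Sum.inr
    rw [hx]
    have key : star (Sum.elim u (Sum.elim v w)) ⬝ᵥ
        ((((1:ℝ)/2) • ((Matrix.fromBlocks (1 : Matrix (Fin p) (Fin p) ℝ)
          (Matrix.fromCols (-(α • Aᵀ)) (0 : Matrix (Fin p) (Fin m) ℝ))
          (0 : Matrix (Fin m ⊕ Fin m) (Fin p) ℝ)
          (Matrix.fromBlocks (α • M) 0 0 ((α / ρ) • Wd))) +
          (Matrix.fromBlocks (1 : Matrix (Fin p) (Fin p) ℝ)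
          (Matrix.fromCols (-(α • Aᵀ)) (0 : Matrix (Fin p) (Fin m) ℝ))
          (0 : Matrix (Fin m ⊕ Fin m) (Fin p) ℝ)
          (Matrix.fromBlocks (α • M) 0 0 ((α / ρ) • Wd)))ᵀ)) *ᵥ Sum.elim u (Sum.elim v w)) =
        u ⬝ᵥ u - α * (u ⬝ᵥ (Aᵀ *ᵥ v)) + α * (v ⬝ᵥ (M *ᵥ v)) + (α / ρ) * (w ⬝ᵥ (Wd *ᵥ w)) := by
      simp [fromBlocks_transpose, transpose_fromCols, fromBlocks_mulVec,
        fromCols_mulVec_sumElim, fromRows_mulVec, sumElim_dotProduct_sumElim,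
        smul_mulVec, neg_mulVec, mulVec_smul, dotProduct_add, dotProduct_smul,
        dotProduct_neg, add_mulVec, smul_mulVec, transpose_smul, transpose_neg,
        transpose_transpose, mulVec_transpose, vecMul_transpose, dotProduct_mulVec,
        smul_eq_mul]
      ring_nf
      rw [show (v ᵥ* A) ⬝ᵥ u = u ⬝ᵥ (v ᵥ* A) from dotProduct_comm _ _,
        show v ᵥ* M ⬝ᵥ v = v ⬝ᵥ (v ᵥ* M) from dotProduct_comm _ _,
        show w ᵥ* Wd ⬝ᵥ w = w ⬝ᵥ (w ᵥ* Wd) from dotProduct_comm _ _]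
      ring
    rw [key]
    set a : ℝ := ‖(WithLp.equiv 2 (Fin p → ℝ)).symm u‖ with ha
    set b : ℝ := ‖(WithLp.equiv 2 (Fin m → ℝ)).symm v‖ with hb
    have hua : u ⬝ᵥ u = a ^ 2 := by
      rw [ha, ← real_inner_self_eq_norm_sq, WithLp.equiv_symm_apply, EuclideanSpace.inner_toLp_toLp]
      simp
    have hvb : v ⬝ᵥ v = b ^ 2 := by
      rw [hb, ← real_inner_self_eq_norm_sq, WithLp.equiv_symm_apply, EuclideanSpace.inner_toLp_toLp]
      simp
    have hwpos : 0 ≤ w ⬝ᵥ (Wd *ᵥ w) := by simpa using hWd.dotProduct_mulVec_nonneg w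
    have hray : μ * b ^ 2 ≤ v ⬝ᵥ (M *ᵥ v) := by
      rw [← hvb]; exact rayleigh_min M hM v
    have hAb : u ⬝ᵥ (Aᵀ *ᵥ v) ≤ C * (a * b) := by
      have e0 : u ⬝ᵥ (Aᵀ *ᵥ v) = (A *ᵥ u) ⬝ᵥ v := by
        rw [dotProduct_mulVec, vecMul_transpose]
      have e1 : (A *ᵥ u) ⬝ᵥ v = ⟪(WithLp.equiv 2 (Fin m → ℝ)).symm (A *ᵥ u),
          (WithLp.equiv 2 (Fin m → ℝ)).symm v⟫ := by
        rw [WithLp.equiv_symm_apply, EuclideanSpace.inner_toLp_toLp]; simp [dotProduct_comm]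
      have e2 : (WithLp.equiv 2 (Fin m → ℝ)).symm (A *ᵥ u) =
          (LinearMap.toContinuousLinearMap (Matrix.toEuclideanLin A))
            ((WithLp.equiv 2 (Fin p → ℝ)).symm u) := by
        simp [Matrix.toEuclideanLin_apply_piLp_toLp]
      have e3 : ‖(LinearMap.toContinuousLinearMap (Matrix.toEuclideanLin A))
          ((WithLp.equiv 2 (Fin p → ℝ)).symm u)‖ ≤ C * a :=
        (LinearMap.toContinuousLinearMap (Matrix.toEuclideanLin A)).le_opNorm _
      calc u ⬝ᵥ (Aᵀ *ᵥ v) = ⟪(WithLp.equiv 2 (Fin m → ℝ)).symm (A *ᵥ u),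
          (WithLp.equiv 2 (Fin m → ℝ)).symm v⟫ := by rw [e0, e1]
        _ ≤ ‖(WithLp.equiv 2 (Fin m → ℝ)).symm (A *ᵥ u)‖ * b := real_inner_le_norm _ _
        _ ≤ (C * a) * b := by
            refine mul_le_mul_of_nonneg_right ?_ (norm_nonneg _)
            rw [e2]; exact e3
        _ = C * (a * b) := by ring
    have hC0 : 0 ≤ C := norm_nonneg _
    have hb0 : 0 ≤ b := norm_nonneg _
    have ha0 : 0 ≤ a := norm_nonneg _
    nlinarith [sq_nonneg (2 * a - α * C * b),
      mul_nonneg (mul_nonneg hα.le (by linarith : (0:ℝ) ≤ 4 * μ - α * C ^ 2)) (sq_nonneg b),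
      mul_le_mul_of_nonneg_left hAb hα.le,
      mul_le_mul_of_nonneg_left hray hα.le,
      mul_nonneg (div_nonneg hα.le hρ.le) hwpos]
end
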